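/- For every positive real ε ≤ 10^{-5} and every integer s ≥ 1/√ε the following holds. Let G be a graph on s vertices with at least s(s−1)/2 − ε s² edges whose edge set is partitioned into two graphs B (blue) and R (red). If R does not have property M_{(1/2+13ε)s} and B contains no triangle, then there exist disjoint vertex sets W1, W2 with |W1|, |W2| ≥ (1/2 − 13√ε)s such that every blue edge with both ends in W1 ∪ W2 has one end in W1 and the other in W2 (i.e., B induces a bipartite subgraph on W1 ∪ W2 with bipartition (W1, W2)). -/

import Mathlib

open SimpleGraph

/-- `e(S,T)`: the number of ordered pairs `(v,w)` with `v ∈ S`, `w ∈ T` and `v` adjacent to `w`;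
this counts edges with one end in `S` and the other in `T`, edges inside `S ∩ T` twice. -/
noncomputable def interCount {V : Type} (G : SimpleGraph V) (S T : Set V) : ℕ :=
  {p : V × V | p.1 ∈ S ∧ p.2 ∈ T ∧ G.Adj p.1 p.2}.ncard

/-- The degree of a vertex. -/
noncomputable def degCount {V : Type} (G : SimpleGraph V) (v : V) : ℕ :=
  (G.neighborSet v).ncard

/-- The codegree of a pair of vertices. -/
noncomputable def codegCount {V : Type} (G : SimpleGraph V) (v w : V) : ℕ :=
  (G.neighborSet v ∩ G.neighborSet w).ncard

/-- A graph is `n`-fit if it has `2n-1` vertices, `⌈(n+1)(2n-1)/2⌉` edges, minimum degree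
exactly `n+1`, all codegrees within `n^0.7` of `n/2`, and `|e(S,T) - |S||T|/2| ≤ n^1.7`
for all vertex sets `S`, `T`. -/
def IsNFit {V : Type} (n : ℕ) (G : SimpleGraph V) : Prop :=
  Nat.card V = 2 * n - 1 ∧
  G.edgeSet.ncard = ((n + 1) * (2 * n - 1) + 1) / 2 ∧
  (∀ v : V, n + 1 ≤ degCount G v) ∧
  (∃ v : V, degCount G v = n + 1) ∧
  (∀ v w : V, v ≠ w → |(codegCount G v w : ℝ) - n / 2| ≤ (n : ℝ) ^ (0.7 : ℝ)) ∧
  (∀ S T : Set V, |(interCount G S T : ℝ) - S.ncard * T.ncard / 2| ≤ (n : ℝ) ^ (1.7 : ℝ))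

/-- `G` contains a cycle of length `m` (a copy of `C_m`). -/
def HasCycleLen {V : Type} (G : SimpleGraph V) (m : ℕ) : Prop :=
  ∃ (v : V) (c : G.Walk v v), c.IsCycle ∧ c.length = m

/-- `G` contains a path of length `k` (with `k` edges) joining `u` and `v`. -/
def HasPathLen {V : Type} (G : SimpleGraph V) (u v : V) (k : ℕ) : Prop :=
  ∃ p : G.Walk u v, p.IsPath ∧ p.length = k

/-- `G → (C_n, C_k)`: every red/blue coloring of the edges of `G` (the red edges forming a
subgraph `R ≤ G`, the blue ones being `G \ R`) yields a red `C_n` or a blue `C_k`. -/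
def ArrowsCC {V : Type} (G : SimpleGraph V) (n k : ℕ) : Prop :=
  ∀ R : SimpleGraph V, R ≤ G → HasCycleLen R n ∨ HasCycleLen (G \ R) k

/-- The density of a pair of vertex sets. -/
noncomputable def dens {V : Type} (G : SimpleGraph V) (S T : Set V) : ℝ :=
  (interCount G S T : ℝ) / (S.ncard * T.ncard)

/-- `(V1, V2)` is an `ε`-regular pair. -/
def IsRegularPair {V : Type} (G : SimpleGraph V) (ε : ℝ) (V1 V2 : Set V) : Prop :=
  ∀ W1 W2 : Set V, W1 ⊆ V1 → W2 ⊆ V2 →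
    ε * V1.ncard ≤ (W1.ncard : ℝ) → ε * V2.ncard ≤ (W2.ncard : ℝ) →
    |dens G V1 V2 - dens G W1 W2| ≤ ε

/-- `(V1, V2)` is a strongly `ε`-regular pair. -/
def IsStronglyRegularPair {V : Type} (G : SimpleGraph V) (ε : ℝ) (V1 V2 : Set V) : Prop :=
  IsRegularPair G ε V1 V2 ∧
  (∀ v ∈ V1, dens G V1 V2 * V2.ncard / 10 ≤ ((G.neighborSet v ∩ V2).ncard : ℝ)) ∧
  (∀ v ∈ V2, dens G V1 V2 * V1.ncard / 10 ≤ ((G.neighborSet v ∩ V1).ncard : ℝ))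

/-- A graph has property `M_t` if it contains a matching saturating `⌈t⌉` vertices which is
contained in a single non-bipartite connected component. -/
def PropertyM {V : Type} (H : SimpleGraph V) (t : ℝ) : Prop :=
  ∃ M : H.Subgraph, M.IsMatching ∧ ⌈t⌉ ≤ (M.verts.ncard : ℤ) ∧
    ∃ c : H.ConnectedComponent, M.verts ⊆ c.supp ∧ ¬ (H.induce c.supp).Colorable 2

open Finset

section AuxCount


open scoped Classical in
lemma aux_pair_card {V : Type} [Fintype V] [DecidableEq V] (G : SimpleGraph V)
    [DecidableRel G.Adj] (P : Finset (V × V)) (hP : ∀ p ∈ P, G.Adj p.1 p.2) :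
    P.card ≤ 2 * G.edgeFinset.card := by
  refine Finset.card_le_mul_card_image_of_maps_to
    (f := fun p : V × V => Sym2.mk p.1 p.2) (t := G.edgeFinset) ?_ 2 ?_
  · intro p hp
    rw [mem_edgeFinset]
    exact (G.mem_edgeSet (v := p.1) (w := p.2)).mpr (hP p hp)
  · intro e _
    induction e with
    | _ a b =>
      have hsub : (P.filter (fun p => Sym2.mk p.1 p.2 = s(a, b))) ⊆ {(a, b), (b, a)} := by
        intro p hp
        rw [mem_filter] at hp
        have hp2 : s(p.1, p.2) = s(a, b) := hp.2
        rcases Sym2.eq_iff.mp hp2 with ⟨h1, h2⟩ | ⟨h1, h2⟩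
        · simp [Prod.ext_iff, h1, h2]
        · simp [Prod.ext_iff, h1, h2]
      calc (P.filter (fun p => Sym2.mk p.1 p.2 = s(a, b))).card
          ≤ ({(a, b), (b, a)} : Finset (V × V)).card := Finset.card_le_card hsub
        _ ≤ 2 := Finset.card_insert_le _ _ |>.trans (by simp)

lemma aux_compl_count {s : ℕ} (hs : 1 ≤ s) (G : SimpleGraph (Fin s)) [DecidableRel G.Adj]
    [DecidableRel (Gᶜ).Adj] :
    2 * G.edgeFinset.card + 2 * (Gᶜ).edgeFinset.card = s * (s - 1) := by
  classical
  have h1 : ∑ v, G.degree v = 2 * G.edgeFinset.card := G.sum_degrees_eq_twice_card_edges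
  have h2 : ∑ v, (Gᶜ).degree v = 2 * (Gᶜ).edgeFinset.card := (Gᶜ).sum_degrees_eq_twice_card_edges
  have h3 : ∀ v : Fin s, G.degree v + (Gᶜ).degree v = s - 1 := by
    intro v
    have hd := G.degree_compl (v := v)
    have hle : G.degree v ≤ Fintype.card (Fin s) - 1 := by
      have := G.degree_lt_card_verts v
      omega
    rw [hd]
    simp only [Fintype.card_fin] at hle ⊢
    omega
  have : ∑ v : Fin s, (G.degree v + (Gᶜ).degree v) = s * (s-1) := by
    rw [Finset.sum_congr rfl (fun v _ => h3 v)]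
    simp [Finset.card_univ, mul_comm]
  rw [Finset.sum_add_distrib, h1, h2] at this
  omega

end AuxCount

section AuxMatch


open scoped Classical

variable {V : Type} [Fintype V] [DecidableEq V] {R : SimpleGraph V} [DecidableRel R.Adj]

lemma aux_mem_supp {c : R.ConnectedComponent} {v w : V} (hv : v ∈ c.supp) (h : R.Adj v w) :
    w ∈ c.supp := by
  rw [ConnectedComponent.mem_supp_iff] at hv ⊢
  rw [← hv]
  exact ConnectedComponent.sound h.symm.reachable

lemma aux_bot_matching : (⊥ : R.Subgraph).IsMatching := by
  intro v hv
  simp [Subgraph.verts_bot] at hv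

lemma aux_extend_matching {M : R.Subgraph} (hM : M.IsMatching) {u w : V} (h : R.Adj u w)
    (hu : u ∉ M.verts) (hw : w ∉ M.verts) :
    (M ⊔ R.subgraphOfAdj h).IsMatching ∧ (M ⊔ R.subgraphOfAdj h).verts = M.verts ∪ {u, w} := by
  constructor
  · refine hM.sup (Subgraph.IsMatching.subgraphOfAdj h) ?_
    rw [hM.support_eq_verts, (Subgraph.IsMatching.subgraphOfAdj h).support_eq_verts,
      subgraphOfAdj_verts]
    rw [Set.disjoint_right]
    intro a ha
    rcases ha with rfl | ha
    · exact hu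
    · rw [Set.mem_singleton_iff] at ha; subst ha; exact hw
  · rfl

lemma phase1 (c : R.ConnectedComponent) (D : Finset V) (δ : ℝ)
    (hD : ∀ v ∈ D, v ∈ c.supp ∧ δ ≤ (R.degree v : ℝ)) :
    ∀ (k : ℕ) (M : R.Subgraph), M.IsMatching → M.verts ⊆ c.supp →
      (D.filter (fun v => v ∉ M.verts)).card ≤ k →
      ∃ M' : R.Subgraph, M'.IsMatching ∧ M'.verts ⊆ c.supp ∧ M.verts ⊆ M'.verts ∧
        ((↑D : Set V) ⊆ M'.verts ∨ δ ≤ (M'.verts.ncard : ℝ)) := by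
  intro k
  induction k with
  | zero =>
    intro M hM hMc h0
    refine ⟨M, hM, hMc, subset_rfl, Or.inl ?_⟩
    intro v hv
    by_contra hvM
    have : v ∈ D.filter (fun v => v ∉ M.verts) := by
      simp only [mem_filter]; exact ⟨hv, hvM⟩
    have := Finset.card_pos.mpr ⟨v, this⟩
    omega
  | succ k ih =>
    intro M hM hMc hcard
    by_cases hfin : (D.filter (fun v => v ∉ M.verts)).card = 0
    · refine ⟨M, hM, hMc, subset_rfl, Or.inl ?_⟩
      intro v hv
      by_contra hvM
      have : v ∈ D.filter (fun v => v ∉ M.verts) := by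
        simp only [mem_filter]; exact ⟨hv, hvM⟩
      have := Finset.card_pos.mpr ⟨v, this⟩
      omega
    · by_cases hδ : δ ≤ (M.verts.ncard : ℝ)
      · exact ⟨M, hM, hMc, subset_rfl, Or.inr hδ⟩
      push_neg at hδ
      obtain ⟨u, hu⟩ := Finset.card_pos.mp (Nat.pos_of_ne_zero hfin)
      rw [mem_filter] at hu
      obtain ⟨huD, huM⟩ := hu
      have hdeg : δ ≤ (R.degree u : ℝ) := (hD u huD).2
      have hlt : M.verts.toFinset.card < R.degree u := by
        rw [← Set.ncard_eq_toFinset_card']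
        exact_mod_cast lt_of_lt_of_le hδ hdeg
      have hns : ¬ (R.neighborFinset u ⊆ M.verts.toFinset) := by
        intro hsub
        exact absurd (Finset.card_le_card hsub) (by rw [← card_neighborFinset_eq_degree] at hlt; omega)
      obtain ⟨w, hwN, hwM⟩ := Finset.not_subset.mp hns
      rw [mem_neighborFinset] at hwN
      rw [Set.mem_toFinset] at hwM
      obtain ⟨hM', hverts⟩ := aux_extend_matching hM hwN huM hwM
      have hMc' : (M ⊔ R.subgraphOfAdj hwN).verts ⊆ c.supp := by
        rw [hverts]
        intro x hx
        rcases hx with hx | hx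
        · exact hMc hx
        · have hx' : x = u ∨ x = w := by simpa using hx
          rcases hx' with rfl | rfl
          · exact (hD _ huD).1
          · exact aux_mem_supp (hD _ huD).1 hwN
      have hmeas : (D.filter (fun v => v ∉ (M ⊔ R.subgraphOfAdj hwN).verts)).card ≤ k := by
        have hsub : D.filter (fun v => v ∉ (M ⊔ R.subgraphOfAdj hwN).verts) ⊆
            (D.filter (fun v => v ∉ M.verts)).erase u := by
          intro x hx
          rw [mem_filter] at hx
          rw [Finset.mem_erase, mem_filter]
          have hxM : x ∉ M.verts := fun hxx => hx.2 (by rw [hverts]; exact Or.inl hxx)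
          refine ⟨?_, hx.1, hxM⟩
          rintro rfl
          exact hx.2 (by rw [hverts]; exact Or.inr (Or.inl rfl))
        have := Finset.card_le_card hsub
        have := Finset.card_erase_le (a := u) (s := D.filter (fun v => v ∉ M.verts))
        have hpos : 0 < (D.filter (fun v => v ∉ M.verts)).card := Nat.pos_of_ne_zero hfin
        have := Finset.card_erase_of_mem (by rw [mem_filter]; exact ⟨huD, huM⟩)
          (s := D.filter (fun v => v ∉ M.verts))
        omega
      obtain ⟨M'', h1, h2, h3, h4⟩ := ih (M ⊔ R.subgraphOfAdj hwN) hM' hMc' hmeas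
      exact ⟨M'', h1, h2, fun x hx => h3 (by rw [hverts]; exact Or.inl hx), h4⟩

lemma phase2 (c : R.ConnectedComponent) (H1 : Finset V) (rr : ℕ) (hrr : 0 < rr)
    (hH : ∀ v ∈ H1, v ∈ c.supp)
    (hred : ∀ S : Finset V, S ⊆ H1 → rr ≤ S.card → ∃ u ∈ S, ∃ w ∈ S, R.Adj u w) :
    ∀ (k : ℕ) (M : R.Subgraph), M.IsMatching → M.verts ⊆ c.supp →
      (H1.filter (fun v => v ∉ M.verts)).card ≤ k →
      ∃ M' : R.Subgraph, M'.IsMatching ∧ M'.verts ⊆ c.supp ∧ M.verts ⊆ M'.verts ∧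
        (H1.filter (fun v => v ∉ M'.verts)).card < rr := by
  intro k
  induction k with
  | zero =>
    intro M hM hMc h0
    exact ⟨M, hM, hMc, subset_rfl, by omega⟩
  | succ k ih =>
    intro M hM hMc hcard
    by_cases hlt : (H1.filter (fun v => v ∉ M.verts)).card < rr
    · exact ⟨M, hM, hMc, subset_rfl, hlt⟩
    push_neg at hlt
    obtain ⟨u, huS, w, hwS, hadj⟩ := hred (H1.filter (fun v => v ∉ M.verts))
      (Finset.filter_subset _ _) hlt
    rw [mem_filter] at huS hwS
    obtain ⟨hM', hverts⟩ := aux_extend_matching hM hadj huS.2 hwS.2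
    have hMc' : (M ⊔ R.subgraphOfAdj hadj).verts ⊆ c.supp := by
      rw [hverts]
      intro x hx
      rcases hx with hx | hx
      · exact hMc hx
      · have hx' : x = u ∨ x = w := by simpa using hx
        rcases hx' with rfl | rfl
        · exact hH _ huS.1
        · exact hH _ hwS.1
    have hmeas : (H1.filter (fun v => v ∉ (M ⊔ R.subgraphOfAdj hadj).verts)).card ≤ k := by
      have hsub : H1.filter (fun v => v ∉ (M ⊔ R.subgraphOfAdj hadj).verts) ⊆
          (H1.filter (fun v => v ∉ M.verts)).erase u := by
        intro x hx
        rw [mem_filter] at hx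
        rw [Finset.mem_erase, mem_filter]
        have hxM : x ∉ M.verts := fun hxx => hx.2 (by rw [hverts]; exact Or.inl hxx)
        refine ⟨?_, hx.1, hxM⟩
        rintro rfl
        exact hx.2 (by rw [hverts]; exact Or.inr (Or.inl rfl))
      have h1 := Finset.card_le_card hsub
      have h2 := Finset.card_erase_of_mem (s := H1.filter (fun v => v ∉ M.verts))
        (by rw [mem_filter]; exact huS)
      omega
    obtain ⟨M'', h1, h2, h3, h4⟩ := ih (M ⊔ R.subgraphOfAdj hadj) hM' hMc' hmeas
    exact ⟨M'', h1, h2, fun x hx => h3 (by rw [hverts]; exact Or.inl hx), h4⟩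

lemma build_matching (c : R.ConnectedComponent) (D H₁ : Finset V) (δ : ℝ) (rr : ℕ)
    (hrr : 0 < rr)
    (hD : ∀ v ∈ D, v ∈ c.supp ∧ δ ≤ (R.degree v : ℝ))
    (hH₁ : ∀ v ∈ H₁, v ∈ c.supp)
    (hdisj : Disjoint D H₁)
    (hred : ∀ S : Finset V, S ⊆ H₁ → rr ≤ S.card → ∃ u ∈ S, ∃ w ∈ S, R.Adj u w) :
    ∃ M : R.Subgraph, M.IsMatching ∧ M.verts ⊆ c.supp ∧
      (δ ≤ (M.verts.ncard : ℝ) ∨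
        (D.card : ℝ) + (H₁.card : ℝ) - (rr : ℝ) + 1 ≤ (M.verts.ncard : ℝ)) := by
  obtain ⟨M₁, hM₁, hM₁c, -, hM₁or⟩ := phase1 c D δ hD D.card ⊥ aux_bot_matching
    (by simp) (Finset.card_le_card (Finset.filter_subset _ _))
  obtain ⟨M₂, hM₂, hM₂c, hM₁₂, hM₂r⟩ := phase2 c H₁ rr hrr hH₁ hred H₁.card M₁ hM₁ hM₁c
    (Finset.card_le_card (Finset.filter_subset _ _))
  refine ⟨M₂, hM₂, hM₂c, ?_⟩
  rcases hM₁or with hDsub | hδ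
  · right
    have hDF : D ⊆ M₂.verts.toFinset := fun v hv =>
      Set.mem_toFinset.mpr (hM₁₂ (hDsub (Finset.mem_coe.mpr hv)))
    have hIn : H₁.filter (fun v => v ∈ M₂.verts) ⊆ M₂.verts.toFinset := fun v hv =>
      Set.mem_toFinset.mpr (mem_filter.mp hv).2
    have hUnion : D ∪ H₁.filter (fun v => v ∈ M₂.verts) ⊆ M₂.verts.toFinset :=
      Finset.union_subset hDF hIn
    have hdisj2 : Disjoint D (H₁.filter (fun v => v ∈ M₂.verts)) :=
      hdisj.mono_right (Finset.filter_subset _ _)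
    have hcardU := Finset.card_le_card hUnion
    rw [Finset.card_union_of_disjoint hdisj2] at hcardU
    have hsplit : (H₁.filter (fun v => v ∈ M₂.verts)).card +
        (H₁.filter (fun v => v ∉ M₂.verts)).card = H₁.card :=
      Finset.card_filter_add_card_filter_not _
    have hncard : M₂.verts.ncard = M₂.verts.toFinset.card := Set.ncard_eq_toFinset_card' _
    have hN : D.card + H₁.card + 1 ≤ M₂.verts.toFinset.card + rr := by omega
    rw [hncard]
    have : (D.card : ℝ) + H₁.card + 1 ≤ (M₂.verts.toFinset.card : ℝ) + rr := by
      exact_mod_cast hN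
    linarith
  · left
    have hle : M₁.verts.ncard ≤ M₂.verts.ncard := Set.ncard_le_ncard hM₁₂ (Set.toFinite _)
    calc δ ≤ (M₁.verts.ncard : ℝ) := hδ
      _ ≤ _ := by exact_mod_cast hle

end AuxMatch

section AuxNB


open scoped Classical

variable {V : Type} [Fintype V] [DecidableEq V] {R : SimpleGraph V} [DecidableRel R.Adj]

lemma aux_mem_supp' {c : R.ConnectedComponent} {v w : V} (hv : v ∈ c.supp) (h : R.Adj v w) :
    w ∈ c.supp := by
  rw [ConnectedComponent.mem_supp_iff] at hv ⊢
  rw [← hv]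
  exact ConnectedComponent.sound h.symm.reachable

lemma fin2_eq_of_ne {a b c : Fin 2} (h1 : a ≠ c) (h2 : b ≠ c) : a = b := by
  fin_cases a <;> fin_cases b <;> fin_cases c <;> simp_all

lemma nonbip_highdeg (c : R.ConnectedComponent) (D : Finset V) (δ β : ℝ)
    (hD : ∀ v ∈ D, v ∈ c.supp ∧ δ ≤ (R.degree v : ℝ))
    (hDne : D.Nonempty) (hβ : β ≤ (D.card : ℝ))
    (h2δ : (Fintype.card V : ℝ) < 2 * δ) (hβδ : (Fintype.card V : ℝ) < β + δ) :
    ¬ (R.induce (c.supp : Set V)).Colorable 2 := by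
  rintro ⟨C⟩
  set X : Fin 2 → Finset V :=
    fun i => univ.filter (fun v => ∃ h : v ∈ c.supp, C ⟨v, h⟩ = i) with hX_def
  have hXdisj : Disjoint (X 0) (X 1) := by
    rw [Finset.disjoint_left]
    intro v h0 h1
    rw [hX_def, mem_filter] at h0 h1
    obtain ⟨-, h, e0⟩ := h0
    obtain ⟨-, h', e1⟩ := h1
    have : (0 : Fin 2) = 1 := by rw [← e0, ← e1]
    exact absurd this (by decide)
  have hXcard : (X 0).card + (X 1).card ≤ Fintype.card V := by
    rw [← Finset.card_union_of_disjoint hXdisj]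
    simpa using Finset.card_le_univ (X 0 ∪ X 1)
  have hNsub : ∀ u, ∀ hu : u ∈ D, ∀ i : Fin 2, C ⟨u, (hD u hu).1⟩ ≠ i →
      δ ≤ ((X i).card : ℝ) := by
    intro u hu i hne
    have hsub : R.neighborFinset u ⊆ X i := by
      intro w hw
      rw [mem_neighborFinset] at hw
      have hws : w ∈ c.supp := aux_mem_supp' (hD u hu).1 hw
      have hval : C ⟨u, (hD u hu).1⟩ ≠ C ⟨w, hws⟩ := by
        apply C.valid
        simp only [comap_adj, Function.Embedding.coe_subtype]
        exact hw
      rw [hX_def, mem_filter]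
      exact ⟨mem_univ w, hws, fin2_eq_of_ne hval.symm hne.symm⟩
    calc δ ≤ (R.degree u : ℝ) := (hD u hu).2
      _ ≤ ((X i).card : ℝ) := by
          exact_mod_cast Finset.card_le_card hsub
  have h01 : ∀ a : Fin 2, a = 0 ∨ a = 1 := by decide
  obtain ⟨u₀, hu₀⟩ := hDne
  have hXcardR : ((X 0).card : ℝ) + ((X 1).card : ℝ) ≤ (Fintype.card V : ℝ) := by
    exact_mod_cast hXcard
  by_cases hall : ∀ u, ∀ hu : u ∈ D, C ⟨u, (hD u hu).1⟩ = C ⟨u₀, (hD u₀ hu₀).1⟩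
  · have hsub : D ⊆ X (C ⟨u₀, (hD u₀ hu₀).1⟩) := by
      intro u hu
      rw [hX_def, mem_filter]
      exact ⟨mem_univ u, (hD u hu).1, hall u hu⟩
    have hβX : β ≤ ((X (C ⟨u₀, (hD u₀ hu₀).1⟩)).card : ℝ) :=
      le_trans hβ (by exact_mod_cast Finset.card_le_card hsub)
    rcases h01 (C ⟨u₀, (hD u₀ hu₀).1⟩) with hi₀ | hi₀
    · have hXj : δ ≤ ((X 1).card : ℝ) := hNsub u₀ hu₀ 1 (by rw [hi₀]; decide)
      rw [hi₀] at hβX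
      linarith
    · have hXj : δ ≤ ((X 0).card : ℝ) := hNsub u₀ hu₀ 0 (by rw [hi₀]; decide)
      rw [hi₀] at hβX
      linarith
  · push_neg at hall
    obtain ⟨u₁, hu₁, hne₁⟩ := hall
    have hX1 : δ ≤ ((X (C ⟨u₁, (hD u₁ hu₁).1⟩)).card : ℝ) := hNsub u₀ hu₀ _ (Ne.symm hne₁)
    have hX0 : δ ≤ ((X (C ⟨u₀, (hD u₀ hu₀).1⟩)).card : ℝ) := hNsub u₁ hu₁ _ hne₁
    rcases h01 (C ⟨u₀, (hD u₀ hu₀).1⟩) with hi₀ | hi₀ <;>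
      rcases h01 (C ⟨u₁, (hD u₁ hu₁).1⟩) with hi₁ | hi₁ <;>
      rw [hi₀] at hX0 hne₁ <;> rw [hi₁] at hX1 hne₁ <;>
      first
      | exact absurd rfl hne₁
      | linarith

lemma nonbip_dense (c : R.ConnectedComponent) (H₁ : Finset V) (E : ℝ)
    (hH₁ : ∀ v ∈ H₁, v ∈ c.supp)
    (hmiss : ∀ S : Finset V, S ⊆ H₁ → (∀ u ∈ S, ∀ w ∈ S, ¬ R.Adj u w) →
      (S.card : ℝ) * ((S.card : ℝ) - 1) ≤ E)
    (hnum : ∀ x y : ℕ, H₁.card ≤ x + y →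
      (x : ℝ) * ((x : ℝ) - 1) ≤ E → (y : ℝ) * ((y : ℝ) - 1) ≤ E → False) :
    ¬ (R.induce (c.supp : Set V)).Colorable 2 := by
  rintro ⟨C⟩
  set X : Fin 2 → Finset V :=
    fun i => H₁.filter (fun v => ∃ h : v ∈ c.supp, C ⟨v, h⟩ = i) with hX_def
  have hcover : H₁ ⊆ X 0 ∪ X 1 := by
    intro v hv
    have hvs := hH₁ v hv
    rw [Finset.mem_union, hX_def, mem_filter, mem_filter]
    have h01 : C ⟨v, hvs⟩ = 0 ∨ C ⟨v, hvs⟩ = 1 := by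
      rcases (by decide : ∀ a : Fin 2, a = 0 ∨ a = 1) (C ⟨v, hvs⟩) with h | h
      · exact Or.inl h
      · exact Or.inr h
    rcases h01 with h | h
    · exact Or.inl ⟨hv, hvs, h⟩
    · exact Or.inr ⟨hv, hvs, h⟩
  have hcard : H₁.card ≤ (X 0).card + (X 1).card :=
    le_trans (Finset.card_le_card hcover) (Finset.card_union_le _ _)
  have hnored : ∀ i : Fin 2, ∀ u ∈ X i, ∀ w ∈ X i, ¬ R.Adj u w := by
    intro i u hu w hw hadj
    rw [hX_def, mem_filter] at hu hw
    obtain ⟨-, hus, hue⟩ := hu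
    obtain ⟨-, hws, hwe⟩ := hw
    have hval : C ⟨u, hus⟩ ≠ C ⟨w, hws⟩ := by
      apply C.valid
      simp only [comap_adj, Function.Embedding.coe_subtype]
      exact hadj
    rw [hue, hwe] at hval
    exact hval rfl
  exact hnum (X 0).card (X 1).card hcard
    (hmiss (X 0) (Finset.filter_subset _ _) (hnored 0))
    (hmiss (X 1) (Finset.filter_subset _ _) (hnored 1))

lemma exists_big_chunk (H' : Finset V) (E : ℝ) (hne : H'.Nonempty)
    (hcross : ∀ P : Finset (V × V),
      (∀ p ∈ P, p.1 ∈ H' ∧ p.2 ∈ H' ∧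
        R.connectedComponentMk p.1 ≠ R.connectedComponentMk p.2) → (P.card : ℝ) ≤ E) :
    ∃ u ∈ H', (H'.card : ℝ) * ((H'.card : ℝ) -
      ((H'.filter (fun v => R.connectedComponentMk v = R.connectedComponentMk u)).card : ℝ))
        ≤ E := by
  set f : V → ℕ := fun u =>
    (H'.filter (fun v => R.connectedComponentMk v ≠ R.connectedComponentMk u)).card with hf
  set P : Finset (V × V) := H'.biUnion (fun u => ({u} : Finset V) ×ˢ
    H'.filter (fun v => R.connectedComponentMk v ≠ R.connectedComponentMk u)) with hP
  have hPcard : P.card = ∑ u ∈ H', f u := by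
    rw [hP]
    rw [Finset.card_biUnion]
    · refine Finset.sum_congr rfl (fun u _ => ?_)
      rw [Finset.card_product, Finset.card_singleton, one_mul]
    · intro x hx y hy hxy
      rw [Function.onFun, Finset.disjoint_left]
      intro p hp hq
      rw [Finset.mem_product, Finset.mem_singleton] at hp hq
      exact hxy (hp.1 ▸ hq.1)
  have hPbound : (P.card : ℝ) ≤ E := by
    apply hcross
    intro p hp
    rw [hP, Finset.mem_biUnion] at hp
    obtain ⟨u, hu, hpu⟩ := hp
    rw [Finset.mem_product, Finset.mem_singleton] at hpu
    obtain ⟨h1, h2⟩ := hpu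
    rw [mem_filter] at h2
    exact ⟨h1 ▸ hu, h2.1, by rw [h1]; exact (h2.2 ·.symm)⟩
  obtain ⟨u, hu, hmin⟩ := Finset.exists_min_image H' f hne
  refine ⟨u, hu, ?_⟩
  have hsmul : H'.card • f u ≤ ∑ v ∈ H', f v :=
    Finset.card_nsmul_le_sum H' f (f u) (fun v hv => hmin v hv)
  have hsplit : (H'.filter (fun v =>
        R.connectedComponentMk v = R.connectedComponentMk u)).card + f u = H'.card := by
    rw [hf]
    exact Finset.card_filter_add_card_filter_not _
  have h1 : (H'.card : ℝ) * (f u : ℝ) ≤ (P.card : ℝ) := by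
    rw [hPcard]
    have : H'.card * f u ≤ ∑ v ∈ H', f v := by simpa [smul_eq_mul] using hsmul
    exact_mod_cast this
  have h2 : ((H'.filter (fun v =>
      R.connectedComponentMk v = R.connectedComponentMk u)).card : ℝ) + (f u : ℝ)
      = (H'.card : ℝ) := by exact_mod_cast hsplit
  nlinarith [h1, h2, hPbound]

end AuxNB
-- MAIN
set_option maxHeartbeats 4000000 in
theorem blue_bipartite_structure :
    ∀ ε : ℝ, 0 < ε → ε ≤ 1 / 100000 → ∀ s : ℕ, (1 : ℝ) / Real.sqrt ε ≤ (s : ℝ) →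
    ∀ G B R : SimpleGraph (Fin s),
    (s : ℝ) * ((s : ℝ) - 1) / 2 - ε * (s : ℝ) ^ 2 ≤ (G.edgeSet.ncard : ℝ) →
    B ⊔ R = G → B ⊓ R = ⊥ →
    ¬ PropertyM R ((1 / 2 + 13 * ε) * s) → B.CliqueFree 3 →
    ∃ W1 W2 : Set (Fin s), Disjoint W1 W2 ∧
      (1 / 2 - 13 * Real.sqrt ε) * s ≤ (W1.ncard : ℝ) ∧
      (1 / 2 - 13 * Real.sqrt ε) * s ≤ (W2.ncard : ℝ) ∧
      ∀ v w : Fin s, v ∈ W1 ∪ W2 → w ∈ W1 ∪ W2 → B.Adj v w →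
        ((v ∈ W1 ∧ w ∈ W2) ∨ (v ∈ W2 ∧ w ∈ W1)) := by
  intro ε hε0 hε5 s hs G B R hEdge hBR hI hMprop hBfree
  classical
  set σ := Real.sqrt ε with hσdef
  have hσ0 : 0 < σ := Real.sqrt_pos.mpr hε0
  have hσsq : σ ^ 2 = ε := Real.sq_sqrt hε0.le
  have hσs : 1 ≤ σ * (s : ℝ) := by
    rw [div_le_iff₀ hσ0] at hs
    linarith
  have hσb : σ ≤ 0.0032 := by nlinarith [hσ0.le]
  have hsR : (312 : ℝ) ≤ (s : ℝ) := by nlinarith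
  have hsn : (0:ℝ) ≤ (s:ℝ) := by linarith
  have hq2 : σ * (s:ℝ) ≤ 0.0032 * (s:ℝ) := mul_le_mul_of_nonneg_right hσb hsn
  have hqA : σ * (σ * (s:ℝ)) ≤ 0.0032 * (σ * (s:ℝ)) :=
    mul_le_mul_of_nonneg_right hσb (by positivity)
  have hqC : σ * (σ * (s:ℝ)^2) ≤ 0.0032 * (σ * (s:ℝ)^2) :=
    mul_le_mul_of_nonneg_right hσb (by positivity)
  have hs1 : 1 ≤ s := by exact_mod_cast (by linarith : (1 : ℝ) ≤ (s : ℝ))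
  have hkey : ∀ a b c : Fin s, B.Adj a b → B.Adj a c → B.Adj b c → False := by
    intro a b c hab hac hbc
    exact hBfree {a, b, c} (is3Clique_triple_iff.mpr ⟨hab, hac, hbc⟩)
  have hncard_deg : ∀ (J : SimpleGraph (Fin s)) (v : Fin s),
      (J.neighborSet v).ncard = J.degree v := by
    intro J v
    rw [Set.ncard_eq_toFinset_card', ← neighborFinset_def]
    rfl
  by_cases hBlue : ∃ u v, B.Adj u v ∧ (1 / 2 - 13 * σ) * s ≤ (B.degree u : ℝ) ∧
      (1 / 2 - 13 * σ) * s ≤ (B.degree v : ℝ)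
  · obtain ⟨u, v, huv, hdu, hdv⟩ := hBlue
    refine ⟨B.neighborSet u, B.neighborSet v, ?_, ?_, ?_, ?_⟩
    · rw [Set.disjoint_left]
      intro w hwu hwv
      exact hkey u v w huv hwu hwv
    · rw [hncard_deg]; exact hdu
    · rw [hncard_deg]; exact hdv
    · intro a b ha hb hab
      rcases ha with ha | ha
      · rcases hb with hb | hb
        · exact (hkey u a b ha hb hab).elim
        · exact Or.inl ⟨ha, hb⟩
      · rcases hb with hb | hb
        · exact Or.inr ⟨ha, hb⟩
        · exact (hkey v a b ha hb hab).elim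
  · exfalso
    push_neg at hBlue
    -- counting infrastructure
    have hdegsplit : ∀ v : Fin s, (G.degree v : ℝ) = (B.degree v : ℝ) + (R.degree v : ℝ) := by
      intro v
      have hun : G.neighborFinset v = B.neighborFinset v ∪ R.neighborFinset v := by
        ext w
        simp only [mem_neighborFinset, Finset.mem_union, ← hBR, sup_adj]
      have hdisj : Disjoint (B.neighborFinset v) (R.neighborFinset v) := by
        rw [Finset.disjoint_left]
        intro w hwB hwR
        rw [mem_neighborFinset] at hwB hwR
        have : (B ⊓ R).Adj v w := ⟨hwB, hwR⟩
        rw [hI] at this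
        exact this
      have : G.degree v = B.degree v + R.degree v := by
        rw [← card_neighborFinset_eq_degree, hun, Finset.card_union_of_disjoint hdisj]
        rfl
      exact_mod_cast this
    have hcompl_deg : ∀ v : Fin s, ((Gᶜ).degree v : ℝ) = (s : ℝ) - 1 - (G.degree v : ℝ) := by
      intro v
      have hd := G.degree_compl (v := v)
      have hle : G.degree v < Fintype.card (Fin s) := G.degree_lt_card_verts v
      rw [Fintype.card_fin] at hd hle
      rw [hd]
      have : (↑(s - 1 - G.degree v) : ℝ) = (s : ℝ) - 1 - G.degree v := by
        have h1 : G.degree v ≤ s - 1 := by omega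
        push_cast [Nat.cast_sub h1, Nat.cast_sub hs1]
        ring
      exact this
    have hE : ((Gᶜ).edgeFinset.card : ℝ) ≤ σ ^ 2 * (s : ℝ) ^ 2 := by
      have h := aux_compl_count hs1 G
      have hcast : (G.edgeSet.ncard : ℝ) = (G.edgeFinset.card : ℝ) := by
        congr 1
        rw [Set.ncard_eq_toFinset_card']
        simp [edgeFinset]
      have hcast2 : ((s * (s - 1) : ℕ) : ℝ) = (s : ℝ) * ((s : ℝ) - 1) := by
        push_cast [Nat.cast_sub hs1]
        ring
      have h' : 2 * (G.edgeFinset.card : ℝ) + 2 * ((Gᶜ).edgeFinset.card : ℝ)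
          = (s : ℝ) * ((s : ℝ) - 1) := by
        rw [← hcast2]
        exact_mod_cast congrArg (Nat.cast : ℕ → ℝ) h
      rw [hcast] at hEdge
      rw [hσsq]
      linarith
    have hPair : ∀ P : Finset (Fin s × Fin s), (∀ p ∈ P, p.1 ≠ p.2 ∧ ¬ G.Adj p.1 p.2) →
        (P.card : ℝ) ≤ 2 * (σ ^ 2 * (s : ℝ) ^ 2) := by
      intro P hP
      have h := aux_pair_card Gᶜ P (fun p hp => by
        rw [compl_adj]; exact ⟨(hP p hp).1, (hP p hp).2⟩)
      calc (P.card : ℝ) ≤ 2 * ((Gᶜ).edgeFinset.card : ℝ) := by exact_mod_cast h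
        _ ≤ 2 * (σ ^ 2 * (s : ℝ) ^ 2) := by linarith
    -- main definitions
    set d : ℝ := (1 / 2 - 13 * σ) * s with hd_def
    set δ : ℝ := (1 / 2 + 12 * σ) * s - 1 with hδ_def
    set t : ℝ := (1 / 2 + 13 * ε) * s with ht_def
    set D : Finset (Fin s) := univ.filter (fun v => δ ≤ (R.degree v : ℝ)) with hD_def
    set H : Finset (Fin s) := univ.filter (fun v => d ≤ (B.degree v : ℝ)) with hH_def
    set H' : Finset (Fin s) := H \ D with hH'_def
    set Atyp : Finset (Fin s) :=
      univ.filter (fun v => (G.degree v : ℝ) < (s : ℝ) - 1 - σ * (s : ℝ)) with hAtyp_def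
    have hmemH : ∀ v, v ∈ H ↔ d ≤ (B.degree v : ℝ) := by
      intro v; rw [hH_def, mem_filter]; simp
    have hmemD : ∀ v, v ∈ D ↔ δ ≤ (R.degree v : ℝ) := by
      intro v; rw [hD_def, mem_filter]; simp
    have hNoBlueH : ∀ u v, u ∈ H → v ∈ H → ¬ B.Adj u v := by
      intro u v hu hv hadj
      exact absurd ((hmemH v).mp hv) (not_le.mpr (hBlue u v hadj ((hmemH u).mp hu)))
    have hNoG : ∀ u v, u ∈ H → v ∈ H → ¬ R.Adj u v → ¬ G.Adj u v := by
      intro u v hu hv hR hG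
      rw [← hBR, sup_adj] at hG
      rcases hG with hG | hG
      · exact hNoBlueH u v hu hv hG
      · exact hR hG
    have hoffDiag : ∀ S : Finset (Fin s), (∀ v ∈ S, v ∈ H) →
        (∀ u ∈ S, ∀ w ∈ S, ¬ R.Adj u w) →
        (S.card : ℝ) * ((S.card : ℝ) - 1) ≤ 2 * (σ ^ 2 * (s : ℝ) ^ 2) := by
      intro S hSH hSR
      have h := hPair S.offDiag (fun p hp => by
        rw [Finset.mem_offDiag] at hp
        exact ⟨hp.2.2, hNoG p.1 p.2 (hSH _ hp.1) (hSH _ hp.2.1) (hSR _ hp.1 _ hp.2.1)⟩)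
      have hcard : (S.offDiag.card : ℝ) = (S.card : ℝ) * ((S.card : ℝ) - 1) := by
        have h0 : S.card ≤ S.card * S.card := by nlinarith [Nat.zero_le S.card]
        rw [Finset.offDiag_card]
        push_cast [Nat.cast_sub h0]
        ring
      rw [hcard] at h
      exact h
    have hAtypCard : (Atyp.card : ℝ) ≤ 2 * σ * s := by
      have hsum : ∑ v : Fin s, (Gᶜ).degree v = 2 * (Gᶜ).edgeFinset.card :=
        (Gᶜ).sum_degrees_eq_twice_card_edges
      have hsub : ∑ v ∈ Atyp, ((Gᶜ).degree v : ℝ) ≤ 2 * (σ ^ 2 * (s : ℝ) ^ 2) := by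
        have h1 : ∑ v ∈ Atyp, ((Gᶜ).degree v : ℝ) ≤ ∑ v : Fin s, ((Gᶜ).degree v : ℝ) :=
          Finset.sum_le_sum_of_subset_of_nonneg (Finset.subset_univ _)
            (fun v _ _ => by positivity)
        have h2 : ∑ v : Fin s, ((Gᶜ).degree v : ℝ) = 2 * ((Gᶜ).edgeFinset.card : ℝ) := by
          exact_mod_cast congrArg (Nat.cast : ℕ → ℝ) hsum
        linarith
      have hlow : ∀ v ∈ Atyp, σ * (s : ℝ) ≤ ((Gᶜ).degree v : ℝ) := by
        intro v hv
        rw [hAtyp_def, mem_filter] at hv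
        rw [hcompl_deg v]
        linarith [hv.2]
      have hge : (Atyp.card : ℝ) * (σ * s) ≤ ∑ v ∈ Atyp, ((Gᶜ).degree v : ℝ) := by
        have := Finset.card_nsmul_le_sum Atyp (fun v => ((Gᶜ).degree v : ℝ)) (σ * s) hlow
        simpa [nsmul_eq_mul] using this
      have hσs0 : 0 < σ * (s : ℝ) := by nlinarith
      nlinarith
    have hCover : ∀ v : Fin s, v ∉ D → v ∉ Atyp → v ∈ H := by
      intro v hvD hvA
      rw [hmemD, not_le] at hvD
      rw [hAtyp_def, mem_filter, not_and, not_lt] at hvA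
      have hvA' := hvA (Finset.mem_univ v)
      rw [hmemH]
      have := hdegsplit v
      rw [hd_def]
      rw [hδ_def] at hvD
      linarith
    have hCommon : ∀ u w : Fin s, δ ≤ (R.degree u : ℝ) → δ ≤ (R.degree w : ℝ) →
        ∃ x, R.Adj u x ∧ R.Adj w x := by
      intro u w hu hw
      by_contra hno
      push_neg at hno
      have hdisj : Disjoint (R.neighborFinset u) (R.neighborFinset w) := by
        rw [Finset.disjoint_left]
        intro x hxu hxw
        rw [mem_neighborFinset] at hxu hxw
        exact hno x hxu hxw
      have hcard : R.degree u + R.degree w ≤ s := by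
        rw [← card_neighborFinset_eq_degree, ← card_neighborFinset_eq_degree,
          ← Finset.card_union_of_disjoint hdisj]
        have := Finset.card_le_univ (R.neighborFinset u ∪ R.neighborFinset w)
        simpa using this
      have : (R.degree u : ℝ) + (R.degree w : ℝ) ≤ s := by exact_mod_cast hcard
      rw [hδ_def] at hu hw
      nlinarith
    -- the matching count needed
    have hFinal : ∀ M : R.Subgraph, M.IsMatching → t ≤ (M.verts.ncard : ℝ) →
        (∃ c : R.ConnectedComponent, M.verts ⊆ c.supp ∧
          ¬ (R.induce c.supp).Colorable 2) → False := by
      intro M hM hcount ⟨c, hsupp, hnb⟩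
      exact hMprop ⟨M, hM, by
        rw [ht_def] at hcount
        exact_mod_cast Int.ceil_le.mpr (by exact_mod_cast hcount), c, hsupp, hnb⟩
    have htδ : t ≤ δ := by
      rw [ht_def, hδ_def, ← hσsq]
      nlinarith [hσs, hqA]
    by_cases hDbig : t + 1 ≤ (D.card : ℝ)
    · -- Case 1 : D is large
      have hDne : D.Nonempty := by
        rw [← Finset.card_pos]
        have h0 : (0 : ℝ) < (D.card : ℝ) := by
          have ht0 : (0 : ℝ) ≤ t := by rw [ht_def]; positivity
          linarith
        exact_mod_cast h0
      obtain ⟨u₀, hu₀⟩ := hDne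
      set c := R.connectedComponentMk u₀ with hc
      have hDsupp : ∀ v ∈ D, v ∈ c.supp ∧ δ ≤ (R.degree v : ℝ) := by
        intro v hv
        refine ⟨?_, (hmemD v).mp hv⟩
        obtain ⟨x, hux, hvx⟩ := hCommon u₀ v ((hmemD u₀).mp hu₀) ((hmemD v).mp hv)
        rw [ConnectedComponent.mem_supp_iff, hc]
        exact ConnectedComponent.sound (hvx.reachable.trans hux.reachable.symm)
      obtain ⟨M, hM, hMc, hor⟩ := build_matching c D ∅ δ 1 one_pos hDsupp
        (by simp) (Finset.disjoint_empty_right _)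
        (by
          intro S hS hcard
          exfalso
          rw [Finset.subset_empty] at hS
          subst hS
          simp at hcard)
      refine hFinal M hM ?_ ⟨c, hMc, ?_⟩
      · rcases hor with h | h
        · linarith
        · simp only [Finset.card_empty, Nat.cast_zero] at h
          push_cast at h
          linarith
      · refine nonbip_highdeg c D δ (t + 1) hDsupp ⟨u₀, hu₀⟩ hDbig ?_ ?_
        · rw [Fintype.card_fin, hδ_def]
          nlinarith [hσs, hσ0.le]
        · rw [Fintype.card_fin, ht_def, hδ_def, ← hσsq]
          nlinarith [hσs, hσ0.le, hsR]
    · -- Case 2 : D is small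
      push_neg at hDbig
      have hH'H : ∀ v ∈ H', v ∈ H := fun v hv => (Finset.mem_sdiff.mp hv).1
      -- lower bound on H'
      have hcover2 : s ≤ D.card + H'.card + Atyp.card := by
        have hsub : (univ : Finset (Fin s)) ⊆ D ∪ H' ∪ Atyp := by
          intro v _
          rw [Finset.mem_union, Finset.mem_union]
          by_cases hvD : v ∈ D
          · exact Or.inl (Or.inl hvD)
          by_cases hvA : v ∈ Atyp
          · exact Or.inr hvA
          · exact Or.inl (Or.inr (by
              rw [hH'_def, Finset.mem_sdiff]
              exact ⟨hCover v hvD hvA, hvD⟩))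
        calc s = (univ : Finset (Fin s)).card := by simp
          _ ≤ (D ∪ H' ∪ Atyp).card := Finset.card_le_card hsub
          _ ≤ (D ∪ H').card + Atyp.card := Finset.card_union_le _ _
          _ ≤ D.card + H'.card + Atyp.card := by
              have := Finset.card_union_le D H'
              omega
      have hmR' : (s : ℝ) - (D.card : ℝ) - 2 * σ * s ≤ (H'.card : ℝ) := by
        have : (s : ℝ) ≤ (D.card : ℝ) + (H'.card : ℝ) + (Atyp.card : ℝ) := by
          exact_mod_cast hcover2
        linarith
      have hmR : (s : ℝ) - (t + 1) - 2 * σ * s ≤ (H'.card : ℝ) := by linarith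
      have hm48 : 0.48 * (s : ℝ) ≤ (H'.card : ℝ) := by
        rw [ht_def, ← hσsq] at hmR
        nlinarith [hσs, hqA, hq2]
      have hH'ne : H'.Nonempty := by
        rw [← Finset.card_pos]
        have h0 : (0 : ℝ) < (H'.card : ℝ) := by nlinarith
        exact_mod_cast h0
      obtain ⟨u₁, hu₁, hbig⟩ := exists_big_chunk H' (2 * (σ ^ 2 * (s : ℝ) ^ 2)) hH'ne (by
        intro P hP
        apply hPair
        intro p hp
        obtain ⟨h1, h2, h3⟩ := hP p hp
        have hne : p.1 ≠ p.2 := fun he => h3 (congrArg _ he)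
        refine ⟨hne, hNoG _ _ (hH'H _ h1) (hH'H _ h2) (fun hadj => h3 ?_)⟩
        exact ConnectedComponent.sound hadj.reachable)
      set c := R.connectedComponentMk u₁ with hc
      set H₁ := H'.filter
        (fun v => R.connectedComponentMk v = R.connectedComponentMk u₁) with hH₁_def
      have hH₁H' : H₁ ⊆ H' := Finset.filter_subset _ _
      have hH₁big : (H'.card : ℝ) - 0.014 * (σ * s) ≤ (H₁.card : ℝ) := by
        have hle : (H₁.card : ℝ) ≤ (H'.card : ℝ) := by
          exact_mod_cast Finset.card_le_card hH₁H'
        nlinarith [hbig, hqC, hm48,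
          mul_nonneg (by linarith : (0:ℝ) ≤ (H'.card:ℝ) - 0.48*s)
            (by linarith : (0:ℝ) ≤ (H'.card:ℝ) - (H₁.card:ℝ))]
      have hH₁supp : ∀ v ∈ H₁, v ∈ c.supp := by
        intro v hv
        rw [ConnectedComponent.mem_supp_iff, hc]
        exact (Finset.mem_filter.mp hv).2
      have hH₁D : Disjoint D H₁ := by
        rw [Finset.disjoint_left]
        intro v hvD hvH₁
        exact (Finset.mem_sdiff.mp (hH₁H' hvH₁)).2 hvD
      have hDsupp : ∀ v ∈ D, v ∈ c.supp ∧ δ ≤ (R.degree v : ℝ) := by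
        intro v hv
        have hdeg := (hmemD v).mp hv
        refine ⟨?_, hdeg⟩
        have hnd : ¬ Disjoint (R.neighborFinset v) H₁ := by
          intro hdj
          have hcard : R.degree v + H₁.card ≤ s := by
            rw [← card_neighborFinset_eq_degree, ← Finset.card_union_of_disjoint hdj]
            simpa using Finset.card_le_univ (R.neighborFinset v ∪ H₁)
          have hcardR : (R.degree v : ℝ) + (H₁.card : ℝ) ≤ (s : ℝ) := by exact_mod_cast hcard
          rw [hδ_def] at hdeg
          rw [ht_def, ← hσsq] at hmR
          nlinarith [hσs, hqA, hmR, hH₁big, hcardR]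
        obtain ⟨w, hwN, hwH₁⟩ := Finset.not_disjoint_iff.mp hnd
        rw [mem_neighborFinset] at hwN
        exact aux_mem_supp' (hH₁supp w hwH₁) hwN.symm
      set rr := Nat.floor (2 * σ * (s : ℝ)) + 2 with hrr_def
      have hσs2 : (0:ℝ) ≤ 2 * σ * s := by positivity
      have hrrlb : 2 * σ * (s:ℝ) + 1 ≤ (rr : ℝ) := by
        rw [hrr_def]
        push_cast
        have := Nat.lt_floor_add_one (2 * σ * (s:ℝ))
        linarith
      have hrrub : (rr : ℝ) ≤ 2 * σ * (s:ℝ) + 2 := by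
        rw [hrr_def]
        push_cast
        have := Nat.floor_le hσs2
        linarith
      have hred : ∀ S : Finset (Fin s), S ⊆ H₁ → rr ≤ S.card →
          ∃ u ∈ S, ∃ w ∈ S, R.Adj u w := by
        intro S hS hc'
        by_contra hno
        push_neg at hno
        have hq := hoffDiag S (fun v hv => hH'H _ (hH₁H' (hS hv))) hno
        have hcR : (rr : ℝ) ≤ (S.card : ℝ) := by exact_mod_cast hc'
        have hz1 : 2*σ*(s:ℝ) ≤ (S.card:ℝ) - 1 := by linarith
        nlinarith [hq, hσs, sq_nonneg (σ*(s:ℝ)),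
          mul_nonneg (by linarith : (0:ℝ) ≤ (S.card:ℝ) - (2*σ*s+1))
            (by linarith : (0:ℝ) ≤ (S.card:ℝ) - 1),
          mul_le_mul_of_nonneg_left hz1 (by positivity : (0:ℝ) ≤ 2*σ*(s:ℝ)+1)]
      obtain ⟨M, hM, hMc, hor⟩ := build_matching c D H₁ δ rr (by omega) hDsupp hH₁supp hH₁D hred
      refine hFinal M hM ?_ ⟨c, hMc, ?_⟩
      · rcases hor with h | h
        · linarith
        · rw [ht_def, ← hσsq]
          nlinarith [hσs, hqA, hq2, hmR', hH₁big, hrrub, h]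
      · refine nonbip_dense c H₁ (2 * (σ ^ 2 * (s : ℝ) ^ 2)) hH₁supp
          (fun S hS hno => hoffDiag S (fun v hv => hH'H _ (hH₁H' (hS hv))) hno) ?_
        intro x y hxy h1 h2
        have hxyR : (H₁.card : ℝ) ≤ (x : ℝ) + (y : ℝ) := by exact_mod_cast hxy
        have hH₁46 : 0.46 * (s:ℝ) ≤ (H₁.card : ℝ) := by linarith [hm48, hH₁big, hq2]
        have hE' : 2*(σ^2*(s:ℝ)^2) ≤ 0.0000205*(s:ℝ)^2 := by nlinarith [hσ0.le, sq_nonneg (s:ℝ)]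
        have hsmall : ∀ z : ℕ, (z:ℝ)*((z:ℝ)-1) ≤ 2*(σ^2*(s:ℝ)^2) → (z:ℝ) ≤ 0.2*s := by
          intro z hz
          by_contra hcon
          push_neg at hcon
          nlinarith [hz, hE', hsR,
            mul_nonneg (by linarith : (0:ℝ) ≤ (z:ℝ) - 0.2*s) (Nat.cast_nonneg z),
            mul_lt_mul_of_pos_right hcon (by linarith : (0:ℝ) < 0.2*(s:ℝ) - 1)]
        have := hsmall x h1
        have := hsmall y h2
        linarith
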